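/- arXiv:2304.00103 — 3 statements merged into one kernel-verified Lean document; each statement's English description precedes it below -/
import Mathlib

section
/- Let V and Q be real Hilbert spaces, B : V → Q a bounded linear operator, W = ker B, and P : V → V the orthogonal projection onto W. Assume there is β > 0 such that β‖v‖ ≤ ‖Bv‖ for every v ∈ W^⊥. Then for every λ ≥ 0 and every v ∈ V, min(1, β²)·(‖v‖² + λ‖v − Pv‖²) ≤ ‖v‖² + λ‖Bv‖² ≤ max(1, ‖B‖²)·(‖v‖² + λ‖v − Pv‖²). In particular the constants are independent of λ. -/
open scoped RealInnerProductSpace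

/-- Under the inf-sup condition `β‖v‖ ≤ ‖Bv‖` on `(ker B)ᗮ`, the
parameter-dependent quadratic forms `‖v‖² + λ‖Bv‖²` and `‖v‖² + λ‖v - Pv‖²` are
spectrally equivalent with constants `min(1, β²)` and `max(1, ‖B‖²)`, uniformly
in `λ ≥ 0`, where `P` is the orthogonal projection onto `ker B`. -/
theorem infsup_uniform_form_equivalence {V Q : Type*}
    [NormedAddCommGroup V] [InnerProductSpace ℝ V] [CompleteSpace V]
    [NormedAddCommGroup Q] [InnerProductSpace ℝ Q] [CompleteSpace Q]
    (B : V →L[ℝ] Q) (P : V → V)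
    (hP : ∀ v : V, P v ∈ LinearMap.ker (B : V →ₗ[ℝ] Q) ∧ v - P v ∈ (LinearMap.ker (B : V →ₗ[ℝ] Q))ᗮ)
    (β : ℝ) (hβ : 0 < β)
    (hinf : ∀ v ∈ (LinearMap.ker (B : V →ₗ[ℝ] Q))ᗮ, β * ‖v‖ ≤ ‖B v‖) :
    ∀ lam : ℝ, 0 ≤ lam → ∀ v : V,
      min 1 (β ^ 2) * (‖v‖ ^ 2 + lam * ‖v - P v‖ ^ 2) ≤ ‖v‖ ^ 2 + lam * ‖B v‖ ^ 2 ∧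
      ‖v‖ ^ 2 + lam * ‖B v‖ ^ 2 ≤ max 1 (‖B‖ ^ 2) * (‖v‖ ^ 2 + lam * ‖v - P v‖ ^ 2) := by
  intro lam hlam v
  obtain ⟨hPk, hPo⟩ := hP v
  have hBv : B v = B (v - P v) := by
    have : B (P v) = 0 := hPk
    simp [map_sub, this]
  have hlow : β * ‖v - P v‖ ≤ ‖B v‖ := by
    rw [hBv]; exact hinf _ hPo
  have hlow2 : β ^ 2 * ‖v - P v‖ ^ 2 ≤ ‖B v‖ ^ 2 := by
    have := mul_self_le_mul_self (by positivity) hlow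
    nlinarith [norm_nonneg (v - P v)]
  have hup : ‖B v‖ ≤ ‖B‖ * ‖v - P v‖ := by
    rw [hBv]; exact B.le_opNorm _
  have hup2 : ‖B v‖ ^ 2 ≤ ‖B‖ ^ 2 * ‖v - P v‖ ^ 2 := by
    have := mul_self_le_mul_self (norm_nonneg _) hup
    nlinarith [norm_nonneg (B v)]
  constructor
  · have h1 : min 1 (β ^ 2) ≤ 1 := min_le_left _ _
    have h2 : min 1 (β ^ 2) ≤ β ^ 2 := min_le_right _ _
    nlinarith [mul_le_mul_of_nonneg_left hlow2 hlam,
      mul_le_mul_of_nonneg_right h1 (sq_nonneg ‖v‖),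
      mul_le_mul_of_nonneg_right h2 (mul_nonneg hlam (sq_nonneg ‖v - P v‖))]
  · have h1 : (1 : ℝ) ≤ max 1 (‖B‖ ^ 2) := le_max_left _ _
    have h2 : ‖B‖ ^ 2 ≤ max 1 (‖B‖ ^ 2) := le_max_right _ _
    nlinarith [sq_nonneg ‖v‖, sq_nonneg ‖v - P v‖, mul_le_mul_of_nonneg_left hup2 hlam,
      mul_nonneg hlam (sq_nonneg ‖v - P v‖)]
end

section
/- Let V and Q be real Hilbert spaces, B : V → Q a bounded linear operator with Hilbert-space adjoint B† : Q → V, W = ker B, and P : V → V the orthogonal projection onto W. Assume there is β > 0 such that β‖v‖ ≤ ‖Bv‖ for every v ∈ W^⊥. For λ ≥ 0 define the bounded operators A_λ v = v + λ B†(B v) and M_λ g = (λ/(1+λ))·P g + (1/(1+λ))·g. Then A_λ is bijective, and for every v ∈ V, min(1, β²)·⟨A_λ v, v⟩ ≤ ⟨A_λ v, M_λ(A_λ v)⟩ ≤ max(1, ‖B‖²)·⟨A_λ v, v⟩; equivalently, ⟨g, M_λ g⟩ is uniformly (in λ) spectrally equivalent to ⟨g, A_λ^{-1} g⟩ for all g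 ∈ V. -/
open scoped RealInnerProductSpace

set_option maxHeartbeats 1000000 in
/-- Under the inf-sup condition on `(ker B)ᗮ`, for `λ ≥ 0` the operator
`A_λ v = v + λ B†(B v)` is bijective and the preconditioner
`M_λ g = (λ/(1+λ)) P g + (1/(1+λ)) g` (with `P` the orthogonal projection onto `ker B`)
satisfies the uniform spectral equivalence
`min(1,β²)⟨A_λ v, v⟩ ≤ ⟨A_λ v, M_λ(A_λ v)⟩ ≤ max(1,‖B‖²)⟨A_λ v, v⟩`. -/
theorem preconditioner_spectral_equivalence {V Q : Type*}
    [NormedAddCommGroup V] [InnerProductSpace ℝ V] [CompleteSpace V]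
    [NormedAddCommGroup Q] [InnerProductSpace ℝ Q] [CompleteSpace Q]
    (B : V →L[ℝ] Q) (P : V → V)
    (hP : ∀ v : V, P v ∈ LinearMap.ker (B : V →ₗ[ℝ] Q) ∧ v - P v ∈ (LinearMap.ker (B : V →ₗ[ℝ] Q))ᗮ)
    (β : ℝ) (hβ : 0 < β)
    (hinf : ∀ v ∈ (LinearMap.ker (B : V →ₗ[ℝ] Q))ᗮ, β * ‖v‖ ≤ ‖B v‖)
    (lam : ℝ) (hlam : 0 ≤ lam)
    (A : V → V) (hA : ∀ v, A v = v + lam • (ContinuousLinearMap.adjoint B (B v)))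
    (M : V → V) (hM : ∀ g, M g = (lam / (1 + lam)) • P g + (1 / (1 + lam)) • g) :
    Function.Bijective A ∧
    ∀ v : V,
      min 1 (β ^ 2) * ⟪A v, v⟫ ≤ ⟪A v, M (A v)⟫ ∧
      ⟪A v, M (A v)⟫ ≤ max 1 (‖B‖ ^ 2) * ⟪A v, v⟫ := by
  set W := LinearMap.ker (B : V →ₗ[ℝ] Q) with hW
  set T : V →L[ℝ] V :=
    ContinuousLinearMap.id ℝ V + lam • ((ContinuousLinearMap.adjoint B).comp B) with hT
  have hTapp : ∀ v, T v = v + lam • (ContinuousLinearMap.adjoint B (B v)) := by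
    intro v; simp [hT]
  have hAT : A = T := by funext v; rw [hA v, hTapp v]
  have hs : (0:ℝ) < 1 + lam := by linarith
  -- coercivity of T
  have hcoer : ∀ v : V, ⟪T v, v⟫ = ‖v‖ ^ 2 + lam * ‖B v‖ ^ 2 := by
    intro v
    rw [hTapp v, inner_add_left, real_inner_smul_left,
      ContinuousLinearMap.adjoint_inner_left, real_inner_self_eq_norm_sq,
      real_inner_self_eq_norm_sq]
  have hlow : ∀ v : V, ‖v‖ ^ 2 ≤ ⟪T v, v⟫ := by
    intro v
    have : 0 ≤ lam * ‖B v‖ ^ 2 := by positivity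
    rw [hcoer v]; linarith
  have hanti : ∀ v : V, ‖v‖ ≤ ‖T v‖ := by
    intro v
    rcases eq_or_ne v 0 with rfl | hv
    · simp
    have h1 : ‖v‖ ^ 2 ≤ ‖T v‖ * ‖v‖ := (hlow v).trans (real_inner_le_norm _ _)
    have hv' : 0 < ‖v‖ := norm_pos_iff.mpr hv
    nlinarith
  have hinj : Function.Injective T := by
    intro x y hxy
    have : ‖x - y‖ ≤ ‖T (x - y)‖ := hanti _
    rw [map_sub, hxy, sub_self, norm_zero] at this
    have := norm_nonneg (x - y)
    have h0 : ‖x - y‖ = 0 := le_antisymm ‹‖x - y‖ ≤ 0› this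
    exact sub_eq_zero.mp (norm_eq_zero.mp h0)
  have hbij : Function.Bijective T := by
    refine ⟨hinj, ?_⟩
    have hclosed : IsClosed (Set.range (T : V → V)) := by
      have hAL : AntilipschitzWith 1 (T : V → V) :=
        T.antilipschitz_of_bound (by simpa using hanti)
      exact hAL.isClosed_range T.uniformContinuous
    set K : Submodule ℝ V := LinearMap.range (T : V →ₗ[ℝ] V) with hK
    have hKr : (K : Set V) = Set.range (T : V → V) := by
      ext x; simp [hK, LinearMap.mem_range]
    haveI : CompleteSpace K := by
      have : IsClosed (K : Set V) := by rw [hKr]; exact hclosed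
      exact this.completeSpace_coe
    have hKbot : Kᗮ = ⊥ := by
      rw [Submodule.eq_bot_iff]
      intro x hx
      have hTx : T x ∈ K := ⟨x, rfl⟩
      have h0 : ⟪T x, x⟫ = 0 := (Submodule.mem_orthogonal K x).mp hx (T x) hTx
      have := hlow x
      have : ‖x‖ ^ 2 ≤ 0 := by rw [h0] at this; exact this
      have hxn := norm_nonneg x
      have : ‖x‖ = 0 := by nlinarith
      exact norm_eq_zero.mp this
    have hKtop : K = ⊤ := Submodule.orthogonal_eq_bot_iff.mp hKbot
    intro y
    have : y ∈ K := hKtop ▸ Submodule.mem_top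
    exact this
  refine ⟨hAT ▸ hbij, ?_⟩
  intro v
  -- decomposition
  obtain ⟨hw, hu⟩ := hP v
  set w : V := P v with hwdef
  set u : V := v - P v with hudef
  have hv : w + u = v := by simp [hwdef, hudef]
  have hBw : B w = 0 := hw
  have hBv : B v = B u := by
    rw [← hv]; simp [map_add, hBw]
  set X : V := ContinuousLinearMap.adjoint B (B u) with hX
  have hXW : X ∈ Wᗮ := by
    rw [Submodule.mem_orthogonal]
    intro x hx
    rw [hX, ContinuousLinearMap.adjoint_inner_right]
    have : B x = 0 := hx
    simp [this]
  set z : V := u + lam • X with hz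
  have hzW : z ∈ Wᗮ := Submodule.add_mem _ hu (Submodule.smul_mem _ _ hXW)
  have hAv : A v = w + z := by
    rw [hA v, hBv, ← hv, hz, ← hX, add_assoc]
  -- P (A v) = w
  have hPAv : P (A v) = w := by
    obtain ⟨hw', hu'⟩ := hP (A v)
    have hmemW : P (A v) - w ∈ W := Submodule.sub_mem _ hw' hw
    have hmemO : P (A v) - w ∈ Wᗮ := by
      have : P (A v) - w = z - (A v - P (A v)) := by
        rw [hAv]; abel
      rw [this]
      exact Submodule.sub_mem _ hzW hu'
    have h0 : ⟪P (A v) - w, P (A v) - w⟫ = 0 :=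
      (Submodule.mem_orthogonal W _).mp hmemO _ hmemW
    have := inner_self_eq_zero.mp h0
    exact sub_eq_zero.mp this
  -- inner product identities
  have hwz : ⟪w, z⟫ = 0 := real_inner_comm w z ▸ (Submodule.mem_orthogonal W z).mp hzW w hw
  have hzw : ⟪z, w⟫ = 0 := by rw [real_inner_comm]; exact hwz
  have hwu : ⟪w, u⟫ = 0 := real_inner_comm w u ▸ (Submodule.mem_orthogonal W u).mp hu w hw
  have hXu : ⟪X, u⟫ = ‖B u‖ ^ 2 := by
    rw [hX, ContinuousLinearMap.adjoint_inner_left, real_inner_self_eq_norm_sq]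
  have hzu : ⟪z, u⟫ = ‖u‖ ^ 2 + lam * ‖B u‖ ^ 2 := by
    rw [hz, inner_add_left, real_inner_smul_left, real_inner_self_eq_norm_sq, hXu]
  have hAvv : ⟪A v, v⟫ = ‖w‖ ^ 2 + (‖u‖ ^ 2 + lam * ‖B u‖ ^ 2) := by
    rw [hAv, ← hv, inner_add_left, inner_add_right, inner_add_right,
      real_inner_self_eq_norm_sq, hwu, hzw, hzu]
    ring
  have hnz : ‖z‖ ^ 2 = ‖u‖ ^ 2 + 2 * lam * ‖B u‖ ^ 2 + lam ^ 2 * ‖X‖ ^ 2 := by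
    have h := @norm_add_sq_real V _ _ u (lam • X)
    rw [real_inner_smul_right, norm_smul, Real.norm_eq_abs, abs_of_nonneg hlam,
      real_inner_comm, hXu] at h
    rw [hz, h]; ring
  have hAvM : ⟪A v, M (A v)⟫ = ‖w‖ ^ 2 + (1 / (1 + lam)) * ‖z‖ ^ 2 := by
    rw [hM (A v), hPAv, hAv]
    simp only [inner_add_left, inner_add_right, real_inner_smul_right,
      real_inner_self_eq_norm_sq, hwz, hzw]
    field_simp
    ring
  -- scalar inequalities
  have hbc : β ^ 2 * ‖u‖ ^ 2 ≤ ‖B u‖ ^ 2 := by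
    have h1 := hinf u hu
    have h2 := mul_self_le_mul_self (by positivity) h1
    calc β ^ 2 * ‖u‖ ^ 2 = (β * ‖u‖) * (β * ‖u‖) := by ring
      _ ≤ ‖B u‖ * ‖B u‖ := h2
      _ = ‖B u‖ ^ 2 := by ring
  have hcd : β ^ 2 * ‖B u‖ ^ 2 ≤ ‖X‖ ^ 2 := by
    have h1 : ‖B u‖ ^ 2 ≤ ‖X‖ * ‖u‖ := by
      rw [← hXu]; exact real_inner_le_norm _ _
    have h2 := hinf u hu
    rcases eq_or_lt_of_le (norm_nonneg (B u)) with h3 | h3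
    · rw [← h3]; simpa using sq_nonneg ‖X‖
    · have h5 : β * ‖B u‖ ≤ ‖X‖ := by
        have h4 : β * ‖B u‖ ^ 2 ≤ ‖X‖ * ‖B u‖ := by
          nlinarith [norm_nonneg X, norm_nonneg u]
        nlinarith
      have h6 := mul_self_le_mul_self (by positivity) h5
      calc β ^ 2 * ‖B u‖ ^ 2 = (β * ‖B u‖) * (β * ‖B u‖) := by ring
        _ ≤ ‖X‖ * ‖X‖ := h6
        _ = ‖X‖ ^ 2 := by ring
  have hcB : ‖B u‖ ^ 2 ≤ ‖B‖ ^ 2 * ‖u‖ ^ 2 := by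
    have h1 := B.le_opNorm u
    have h2 := mul_self_le_mul_self (norm_nonneg (B u)) h1
    calc ‖B u‖ ^ 2 = ‖B u‖ * ‖B u‖ := by ring
      _ ≤ (‖B‖ * ‖u‖) * (‖B‖ * ‖u‖) := h2
      _ = ‖B‖ ^ 2 * ‖u‖ ^ 2 := by ring
  have hdB : ‖X‖ ^ 2 ≤ ‖B‖ ^ 2 * ‖B u‖ ^ 2 := by
    have h1 := (ContinuousLinearMap.adjoint B).le_opNorm (B u)
    have h2 : ‖ContinuousLinearMap.adjoint B‖ = ‖B‖ :=
      (ContinuousLinearMap.adjoint : (V →L[ℝ] Q) ≃ₗᵢ⋆[ℝ] (Q →L[ℝ] V)).norm_map B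
    rw [h2] at h1
    have h3 := mul_self_le_mul_self (norm_nonneg X) h1
    calc ‖X‖ ^ 2 = ‖X‖ * ‖X‖ := by ring
      _ ≤ (‖B‖ * ‖B u‖) * (‖B‖ * ‖B u‖) := h3
      _ = ‖B‖ ^ 2 * ‖B u‖ ^ 2 := by ring
  set a := ‖w‖ ^ 2
  set b := ‖u‖ ^ 2
  set c := ‖B u‖ ^ 2
  set d := ‖X‖ ^ 2
  have ha : 0 ≤ a := sq_nonneg _
  have hb : 0 ≤ b := sq_nonneg _
  have hc : 0 ≤ c := sq_nonneg _
  have hd : 0 ≤ d := sq_nonneg _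
  rw [hAvv, hAvM, hnz]
  have heq : a + 1 / (1 + lam) * (b + 2 * lam * c + lam ^ 2 * d)
      = (a * (1 + lam) + (b + 2 * lam * c + lam ^ 2 * d)) / (1 + lam) := by
    field_simp
  constructor
  · set m := min 1 (β ^ 2) with hmdef
    have hm1 : m ≤ 1 := min_le_left _ _
    have hm2 : m ≤ β ^ 2 := min_le_right _ _
    have hm0 : 0 ≤ m := le_min one_pos.le (sq_nonneg β)
    have e1 : m * b ≤ c := le_trans (mul_le_mul_of_nonneg_right hm2 hb) hbc
    have e2 : m * c ≤ d := le_trans (mul_le_mul_of_nonneg_right hm2 hc) hcd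
    rw [heq, le_div_iff₀ hs]
    nlinarith [mul_nonneg ha (sub_nonneg.mpr hm1), mul_nonneg hb (sub_nonneg.mpr hm1),
      mul_nonneg (mul_nonneg hlam ha) (sub_nonneg.mpr hm1),
      mul_nonneg (mul_nonneg hlam hc) (sub_nonneg.mpr hm1),
      mul_nonneg hlam (sub_nonneg.mpr e1),
      mul_nonneg (mul_nonneg hlam hlam) (sub_nonneg.mpr e2)]
  · set m := max 1 (‖B‖ ^ 2) with hmdef
    have hm1 : 1 ≤ m := le_max_left _ _
    have hm2 : ‖B‖ ^ 2 ≤ m := le_max_right _ _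
    have f1 : c ≤ m * b := hcB.trans (mul_le_mul_of_nonneg_right hm2 hb)
    have f2 : d ≤ m * c := hdB.trans (mul_le_mul_of_nonneg_right hm2 hc)
    rw [heq, div_le_iff₀ hs]
    nlinarith [mul_nonneg ha (sub_nonneg.mpr hm1), mul_nonneg hb (sub_nonneg.mpr hm1),
      mul_nonneg (mul_nonneg hlam ha) (sub_nonneg.mpr hm1),
      mul_nonneg (mul_nonneg hlam hc) (sub_nonneg.mpr hm1),
      mul_nonneg hlam (sub_nonneg.mpr f1),
      mul_nonneg (mul_nonneg hlam hlam) (sub_nonneg.mpr f2)]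
end

section
/- Let d ≥ 1, let ξ ∈ ℝ^d be nonzero, let λ ≥ 0, and let f ∈ ℝ^d. Define u_λ = 2|ξ|^{-2}(f − ((2λ+1)/(2(λ+1)))·Π_ξ f), u_∞ = 2|ξ|^{-2}(f − Π_ξ f), and u_0 = 2|ξ|^{-2}(f − (1/2)·Π_ξ f), where Π_ξ = |ξ|^{-2} ξξ^T. Then u_λ = (λ/(λ+1))·u_∞ + (1/(λ+1))·u_0, and moreover (1/2)|ξ|²·(u_λ + (2λ+1)·Π_ξ u_λ) = f. -/
open Matrix

/-- For nonzero `ξ ∈ ℝ^d`, `λ ≥ 0` and `f ∈ ℝ^d`, the Fourier solutions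
`u_λ = 2|ξ|⁻²(f - ((2λ+1)/(2(λ+1))) Π_ξ f)`, `u_∞ = 2|ξ|⁻²(f - Π_ξ f)`,
`u_0 = 2|ξ|⁻²(f - (1/2) Π_ξ f)` satisfy the convex combination identity
`u_λ = (λ/(λ+1)) u_∞ + (1/(λ+1)) u_0`, and `u_λ` solves the elasticity symbol equation
`(1/2)|ξ|² (u_λ + (2λ+1) Π_ξ u_λ) = f`. -/
theorem periodic_convex_combination {d : ℕ} (hd : 1 ≤ d)
    (ξ : Fin d → ℝ) (hξ : ξ ≠ 0) (lam : ℝ) (hlam : 0 ≤ lam) (f : Fin d → ℝ)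
    (Pr : Matrix (Fin d) (Fin d) ℝ)
    (hPr : ∀ j k, Pr j k = ξ j * ξ k / ∑ i, ξ i ^ 2)
    (ulam uinf u0 : Fin d → ℝ)
    (hulam : ulam = (2 / ∑ i, ξ i ^ 2) •
      (f - ((2 * lam + 1) / (2 * (lam + 1))) • Pr.mulVec f))
    (huinf : uinf = (2 / ∑ i, ξ i ^ 2) • (f - Pr.mulVec f))
    (hu0 : u0 = (2 / ∑ i, ξ i ^ 2) • (f - (1 / 2 : ℝ) • Pr.mulVec f)) :
    ulam = (lam / (lam + 1)) • uinf + (1 / (lam + 1)) • u0 ∧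
    ((∑ i, ξ i ^ 2) / 2) • (ulam + (2 * lam + 1) • Pr.mulVec ulam) = f := by
  set S : ℝ := ∑ i, ξ i ^ 2 with hSdef
  have hS : S ≠ 0 := by
    intro h
    apply hξ
    funext i
    have hnn : ∀ j ∈ Finset.univ, (0:ℝ) ≤ ξ j ^ 2 := fun j _ => sq_nonneg _
    have := (Finset.sum_eq_zero_iff_of_nonneg hnn).mp h i (Finset.mem_univ i)
    exact pow_eq_zero_iff (by norm_num) |>.mp this
  have hl1 : lam + 1 ≠ 0 := by positivity
  -- pointwise formula for Pr.mulVec g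
  have hmv : ∀ g : Fin d → ℝ, ∀ j, Pr.mulVec g j = ξ j * (∑ k, ξ k * g k) / S := by
    intro g j
    simp only [mulVec, dotProduct, hPr]
    rw [Finset.mul_sum, Finset.sum_div]
    exact Finset.sum_congr rfl fun k _ => by ring
  have hsumξ : ∑ k, ξ k * ξ k = S := by
    rw [hSdef]; congr 1; ext k; ring
  constructor
  · funext j
    simp only [hulam, huinf, hu0, Pi.add_apply, Pi.smul_apply, Pi.sub_apply, smul_eq_mul,
      hmv]
    field_simp
    ring
  · funext j
    have hPu : Pr.mulVec ulam j = ξ j * (∑ k, ξ k * f k) / ((lam + 1) * S ^ 2) := by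
      rw [hmv]
      have : (∑ k, ξ k * ulam k) = (∑ k, ξ k * f k) / ((lam + 1) * S) := by
        simp only [hulam, Pi.smul_apply, Pi.sub_apply, smul_eq_mul, hmv]
        rw [Finset.sum_congr rfl (fun k _ => by
          show ξ k * (2 / S * (f k - (2 * lam + 1) / (2 * (lam + 1)) * (ξ k * (∑ i, ξ i * f i) / S)))
            = 2 / S * (ξ k * f k) - (2*lam+1)/((lam+1)*S^2) * (ξ k * ξ k) * (∑ i, ξ i * f i)
          field_simp)]
        rw [Finset.sum_sub_distrib, ← Finset.mul_sum, ← Finset.sum_mul, ← Finset.mul_sum, hsumξ]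
        field_simp
        ring
      rw [this]
      field_simp
    simp only [Pi.smul_apply, Pi.add_apply, smul_eq_mul]
    rw [hPu, hulam]
    simp only [Pi.smul_apply, Pi.sub_apply, smul_eq_mul, hmv]
    field_simp
    ring
end
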